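/- Let n ≥ 1 and let k₁,…,k_{2n} be integers with |k_j − k_{j+1}| ≥ 1 for every j = 1,…,2n−1. Define I'ₙ = ∫_{−π}^{π} [sin((k₁+k_{2n})η/2)/sin(η/2)] · ∏_{j=1}^{2n−1} [sin((k_j−k_{j+1})η/2) / ((k_j−k_{j+1}) sin(η/2))] dη. Then I'ₙ = 2π · sgn(k₁+k_{2n}) · (∏_{j=1}^{2n−1} 1/|k_j−k_{j+1}|) · N, where N is the number of tuples (m₁,…,m_{2n}) of integers with 0 ≤ m_j ≤ |k_j−k_{j+1}|−1 for j = 1,…,2n−1, 0 ≤ m_{2n} ≤ |k₁+k_{2n}|−1, and 2(m₁+⋯+m_{2n}) = ∑_{j=1}^{2n−1}|k_j−k_{j+1}| + |k₁+k_{2n}| − 2n. -/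

import Mathlib

open Real intervalIntegral

theorem sin_nat_mul (A : ℕ) (z : ℂ) :
    Complex.sin ((A:ℂ) * z) =
      Complex.sin z * ∑ m ∈ Finset.range A, Complex.exp ((((A:ℂ) - 1 - 2*(m:ℂ)) * z) * Complex.I) := by
  have key : ∀ m : ℕ, Complex.sin z * Complex.exp ((((A:ℂ) - 1 - 2*(m:ℂ)) * z) * Complex.I)
      = ((Complex.exp ((((A:ℂ) - 2*(((m+1):ℕ):ℂ)) * z) * Complex.I)
        - Complex.exp ((((A:ℂ) - 2*(m:ℂ)) * z) * Complex.I)) * Complex.I / 2) := by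
    intro m
    have e1 : (((A:ℂ) - 2*(((m+1):ℕ):ℂ)) * z) * Complex.I
        = (-z * Complex.I) + ((((A:ℂ) - 1 - 2*(m:ℂ)) * z) * Complex.I) := by push_cast; ring
    have e2 : (((A:ℂ) - 2*(m:ℂ)) * z) * Complex.I
        = (z * Complex.I) + ((((A:ℂ) - 1 - 2*(m:ℂ)) * z) * Complex.I) := by ring
    rw [e1, e2, Complex.exp_add, Complex.exp_add, Complex.sin]
    ring
  rw [Finset.mul_sum]
  rw [Finset.sum_congr rfl (fun m _ => key m)]
  rw [← Finset.sum_div, ← Finset.sum_mul,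
    Finset.sum_range_sub (fun m : ℕ => Complex.exp ((((A:ℂ) - 2*(m:ℂ)) * z) * Complex.I)) A]
  have e3 : (((A:ℂ) - 2*((A:ℕ):ℂ)) * z) * Complex.I = -((A:ℂ)*z) * Complex.I := by ring
  have e4 : (((A:ℂ) - 2*(((0:ℕ)):ℂ)) * z) * Complex.I = ((A:ℂ)*z) * Complex.I := by push_cast; ring
  rw [e3, e4, Complex.sin]

theorem sin_nat_mul_int (A : ℕ) (z : ℂ) :
    Complex.sin ((A:ℂ) * z) =
      Complex.sin z * ∑ m ∈ Finset.Icc (0:ℤ) ((A:ℤ)-1),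
        Complex.exp ((((A:ℂ) - 1 - 2*(m:ℂ)) * z) * Complex.I) := by
  rw [sin_nat_mul]
  congr 1
  refine Finset.sum_nbij' (fun m : ℕ => (m:ℤ)) (fun m : ℤ => m.toNat) ?_ ?_ ?_ ?_ ?_
  · intro a ha; simp only [Finset.mem_range] at ha; simp only [Finset.mem_Icc]; omega
  · intro a ha; simp only [Finset.mem_Icc] at ha; simp only [Finset.mem_range]; omega
  · intro a _; simp
  · intro a ha; simp only [Finset.mem_Icc] at ha; simp [Int.toNat_of_nonneg ha.1]
  · intro a _; norm_num

theorem prod_sin_eq (N : ℕ) (A : ℕ → ℕ) (θ : ℝ) :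
    ∏ i : Fin N, Real.sin ((A i) * θ)
      = (Real.sin θ)^N *
        ∑ m ∈ Fintype.piFinset (fun i : Fin N => Finset.Icc (0:ℤ) ((A i :ℤ)-1)),
          Real.cos ((((∑ i : Fin N, (A i : ℤ)) - N - 2 * ∑ i, m i : ℤ) : ℝ) * θ) := by
  have hC : ((∏ i : Fin N, Real.sin ((A i) * θ) : ℝ) : ℂ)
      = ((Real.sin θ ^ N : ℝ) : ℂ) *
        ∑ m ∈ Fintype.piFinset (fun i : Fin N => Finset.Icc (0:ℤ) ((A i:ℤ)-1)),
          Complex.exp (((((∑ i : Fin N, (A i : ℤ)) - N - 2 * ∑ i, m i : ℤ) : ℝ) * θ : ℝ) * Complex.I) := by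
    push_cast [Complex.ofReal_pow]
    have h1 : ∀ i : Fin N, Complex.sin ((A i : ℂ) * (θ:ℂ))
        = Complex.sin θ * ∑ m ∈ Finset.Icc (0:ℤ) ((A i:ℤ)-1),
            Complex.exp ((((A i:ℂ) - 1 - 2*(m:ℂ)) * θ) * Complex.I) := fun i => sin_nat_mul_int _ _
    calc ∏ i : Fin N, Complex.sin ((A i : ℂ) * (θ:ℂ))
        = ∏ i : Fin N, (Complex.sin θ * ∑ m ∈ Finset.Icc (0:ℤ) ((A i:ℤ)-1),
            Complex.exp ((((A i:ℂ) - 1 - 2*(m:ℂ)) * θ) * Complex.I)) := Finset.prod_congr rfl (fun i _ => h1 i)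
      _ = (Complex.sin θ)^N * ∏ i : Fin N, ∑ m ∈ Finset.Icc (0:ℤ) ((A i:ℤ)-1),
            Complex.exp ((((A i:ℂ) - 1 - 2*(m:ℂ)) * θ) * Complex.I) := by
            rw [Finset.prod_mul_distrib, Finset.prod_const, Finset.card_univ, Fintype.card_fin]
      _ = (Complex.sin θ)^N * ∑ m ∈ Fintype.piFinset (fun i : Fin N => Finset.Icc (0:ℤ) ((A i:ℤ)-1)),
            ∏ i : Fin N, Complex.exp ((((A i:ℂ) - 1 - 2*((m i):ℂ)) * θ) * Complex.I) := by
            rw [Finset.prod_univ_sum]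
      _ = _ := by
            congr 1
            refine Finset.sum_congr rfl (fun m _ => ?_)
            rw [← Complex.exp_sum]
            congr 1
            rw [← Finset.sum_mul, ← Finset.sum_mul]
            congr 1
            rw [Finset.sum_sub_distrib, Finset.sum_sub_distrib, Finset.sum_const, Finset.card_univ,
              Fintype.card_fin, ← Finset.mul_sum]
            push_cast
            ring
  have h2 := congrArg Complex.re hC
  simp only [Complex.ofReal_re, Complex.re_ofReal_mul, Complex.re_sum,
    Complex.exp_ofReal_mul_I_re] at h2
  exact h2

theorem sin_int_mul (K : ℤ) (x : ℝ) :
    Real.sin ((K:ℝ) * x) = (K.sign : ℝ) * Real.sin ((K.natAbs : ℝ) * x) := by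
  rcases lt_trichotomy K 0 with h | h | h
  · rw [Int.sign_eq_neg_one_of_neg h]
    have : ((K.natAbs : ℝ)) = -(K:ℝ) := by
      rw [Nat.cast_natAbs]; push_cast; rw [abs_of_neg]; exact_mod_cast h
    rw [this]
    rw [neg_mul, Real.sin_neg]; push_cast; ring
  · subst h; simp
  · rw [Int.sign_eq_one_of_pos h]
    have : ((K.natAbs : ℝ)) = (K:ℝ) := by
      rw [Nat.cast_natAbs]; push_cast; rw [abs_of_pos]; exact_mod_cast h
    rw [this]; simp

theorem factor_eq (K : ℤ) (θ s : ℝ) :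
    Real.sin ((K:ℝ)*θ) / ((K:ℝ) * s) = (1/((|K|:ℤ):ℝ)) * (Real.sin ((K.natAbs : ℝ)*θ) / s) := by
  rw [sin_int_mul]
  rcases lt_trichotomy K 0 with h | h | h
  · rw [Int.sign_eq_neg_one_of_neg h, abs_of_neg h]
    push_cast
    rw [div_mul_div_comm, one_mul]
    rw [neg_one_mul, neg_div, neg_mul, div_neg]
  · subst h; simp
  · rw [Int.sign_eq_one_of_pos h, abs_of_pos h, div_mul_div_comm, one_mul]
    norm_num

theorem integral_cos_int (t : ℤ) :
    ∫ η in (-π)..π, Real.cos ((t:ℝ) * η) = if t = 0 then 2*π else 0 := by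
  rcases eq_or_ne t 0 with h|h
  · simp [h, two_mul]
  · rw [if_neg h]
    have ht : (t:ℝ) ≠ 0 := Int.cast_ne_zero.mpr h
    rw [intervalIntegral.integral_comp_mul_left Real.cos ht, integral_cos]
    rw [mul_neg, Real.sin_neg, Real.sin_int_mul_pi]
    simp

theorem even_abs_sub (a : ℤ) : Even (|a| - a) := by
  rcases abs_choice a with h|h
  · rw [h]; simp
  · rw [h]; exact ⟨-a, by ring⟩

theorem reindex_gen {M : Type*} [CommMonoid M] (n : ℕ) (hn : 1 ≤ n) (g : ℕ → M) (B : ℕ → M)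
    (hB : ∀ i, i + 1 ≤ 2*n - 1 → g i = B (i+1)) :
    ∏ i : Fin (2*n), g i = g (2*n-1) * ∏ j ∈ Finset.Icc 1 (2*n-1), B j := by
  rw [Fin.prod_univ_eq_prod_range g (2*n)]
  have h1 : 2*n = (2*n-1)+1 := by omega
  conv_lhs => rw [h1]
  rw [Finset.prod_range_succ, mul_comm]
  congr 1
  rw [← Finset.Ico_add_one_right_eq_Icc, Finset.prod_Ico_eq_prod_range]
  have h2 : 2*n - 1 + 1 - 1 = 2*n - 1 := by omega
  rw [h2]
  exact Finset.prod_congr rfl (fun i hi => by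
    rw [Finset.mem_range] at hi
    rw [hB i (by omega)]
    congr 1
    omega)

theorem reindex_gen_add {M : Type*} [AddCommMonoid M] (n : ℕ) (hn : 1 ≤ n) (g : ℕ → M) (B : ℕ → M)
    (hB : ∀ i, i + 1 ≤ 2*n - 1 → g i = B (i+1)) :
    ∑ i : Fin (2*n), g i = g (2*n-1) + ∑ j ∈ Finset.Icc 1 (2*n-1), B j := by
  exact reindex_gen (M := Multiplicative M) n hn g B hB

theorem tele_sum (n : ℕ) (hn : 1 ≤ n) (k : ℕ → ℤ) :
    ∑ j ∈ Finset.Icc 1 (2*n-1), (k j - k (j+1)) = k 1 - k (2*n) := by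
  rw [← Finset.Ico_add_one_right_eq_Icc, Finset.sum_Ico_eq_sum_range]
  have h2 : 2*n - 1 + 1 - 1 = 2*n - 1 := by omega
  rw [h2]
  have := Finset.sum_range_sub' (fun i => k (1+i)) (2*n-1)
  rw [Finset.sum_congr rfl (fun i _ => by
    show k (1+i) - k (1+i+1) = (fun i => k (1+i)) i - (fun i => k (1+i)) (i+1)
    simp only []
    rw [Nat.add_assoc])]
  rw [this]
  have e1 : 1 + 0 = 1 := rfl
  have e2 : 1 + (2*n-1) = 2*n := by omega
  rw [e1, e2]

/-- Exact evaluation of the integral `I'ₙ`: for `n ≥ 1` and integers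
`k₁, …, k_{2n}` with `|k_j − k_{j+1}| ≥ 1` for `j = 1, …, 2n−1`,
`I'ₙ = 2π · sgn(k₁+k_{2n}) · (∏_{j=1}^{2n−1} 1/|k_j−k_{j+1}|) · N`, where `N` is the
number of integer tuples `(m₁,…,m_{2n})` with `0 ≤ m_j ≤ |k_j−k_{j+1}|−1` for
`j = 1,…,2n−1`, `0 ≤ m_{2n} ≤ |k₁+k_{2n}|−1`, and
`2(m₁+⋯+m_{2n}) = ∑_{j=1}^{2n−1}|k_j−k_{j+1}| + |k₁+k_{2n}| − 2n`. -/
theorem In'_eq (n : ℕ) (hn : 1 ≤ n) (k : ℕ → ℤ)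
    (hk : ∀ j, 1 ≤ j → j ≤ 2 * n - 1 → 1 ≤ |k j - k (j + 1)|) :
    ∫ η in (-π)..π,
        (Real.sin (((k 1 + k (2 * n) : ℤ) : ℝ) * η / 2) / Real.sin (η / 2)) *
          ∏ j ∈ Finset.Icc 1 (2 * n - 1),
            Real.sin (((k j - k (j + 1) : ℤ) : ℝ) * η / 2) /
              (((k j - k (j + 1) : ℤ) : ℝ) * Real.sin (η / 2))
      = 2 * π * ((Int.sign (k 1 + k (2 * n)) : ℤ) : ℝ) *
          (∏ j ∈ Finset.Icc 1 (2 * n - 1), (1 / ((|k j - k (j + 1)| : ℤ) : ℝ))) *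
          (({ m : Fin (2 * n) → ℤ |
              (∀ i : Fin (2 * n), 0 ≤ m i) ∧
              (∀ i : Fin (2 * n), (i : ℕ) + 1 ≤ 2 * n - 1 →
                m i ≤ |k ((i : ℕ) + 1) - k ((i : ℕ) + 2)| - 1) ∧
              (∀ i : Fin (2 * n), (i : ℕ) + 1 = 2 * n →
                m i ≤ |k 1 + k (2 * n)| - 1) ∧
              2 * (∑ i, m i) =
                (∑ j ∈ Finset.Icc 1 (2 * n - 1), |k j - k (j + 1)|) +
                  |k 1 + k (2 * n)| - 2 * n }).ncard : ℝ) := by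
  by_cases hS0 : k 1 + k (2 * n) = 0
  · have hz : ∀ η:ℝ, (Real.sin (((k 1 + k (2 * n) : ℤ) : ℝ) * η / 2) / Real.sin (η / 2)) *
          ∏ j ∈ Finset.Icc 1 (2 * n - 1),
            Real.sin (((k j - k (j + 1) : ℤ) : ℝ) * η / 2) /
              (((k j - k (j + 1) : ℤ) : ℝ) * Real.sin (η / 2)) = 0 := by
      intro η; rw [hS0]; simp
    rw [intervalIntegral.integral_congr (g := fun _ => (0:ℝ)) (fun x _ => hz x)]
    rw [hS0]
    simp
  -- main case
  set A : ℕ → ℕ := fun i => if i + 1 ≤ 2*n - 1 then (k (i+1) - k (i+2)).natAbs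
      else (k 1 + k (2*n)).natAbs with hA
  have hAval1 : ∀ i, i + 1 ≤ 2*n - 1 → A i = (k (i+1) - k (i+2)).natAbs := by
    intro i h; rw [hA]; simp only; rw [if_pos h]
  have hAval2 : ∀ i, ¬ (i + 1 ≤ 2*n - 1) → A i = (k 1 + k (2*n)).natAbs := by
    intro i h; rw [hA]; simp only; rw [if_neg h]
  have hsumA : (∑ i : Fin (2*n), (A i : ℤ))
      = |k 1 + k (2*n)| + ∑ j ∈ Finset.Icc 1 (2*n-1), |k j - k (j+1)| := by
    have hr := reindex_gen_add n hn (fun i => (A i : ℤ)) (fun j => |k j - k (j+1)|) (by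
      intro i hi
      rw [hAval1 i hi, Int.natCast_natAbs])
    rw [hr]
    rw [hAval2 (2*n-1) (by omega), Int.natCast_natAbs]
  have hprod : ∀ θ s : ℝ, ∏ i : Fin (2*n), (Real.sin ((A i : ℝ) * θ) / s)
      = (Real.sin (((k 1 + k (2*n)).natAbs : ℝ) * θ) / s) *
        ∏ j ∈ Finset.Icc 1 (2*n-1), (Real.sin (((k j - k (j+1)).natAbs : ℝ) * θ) / s) := by
    intro θ s
    have hr := reindex_gen n hn (fun i => Real.sin ((A i : ℝ) * θ) / s)
      (fun j => Real.sin (((k j - k (j+1)).natAbs : ℝ) * θ) / s) (by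
      intro i hi
      rw [hAval1 i hi])
    rw [hr]
    rw [hAval2 (2*n-1) (by omega)]
  have hpt : ∀ η : ℝ, Real.sin (η/2) ≠ 0 →
      (Real.sin (((k 1 + k (2 * n) : ℤ) : ℝ) * η / 2) / Real.sin (η / 2)) *
        ∏ j ∈ Finset.Icc 1 (2 * n - 1),
          Real.sin (((k j - k (j + 1) : ℤ) : ℝ) * η / 2) /
            (((k j - k (j + 1) : ℤ) : ℝ) * Real.sin (η / 2))
      = (((k 1 + k (2*n)).sign : ℝ) *
          ∏ j ∈ Finset.Icc 1 (2*n-1), (1/((|k j - k (j+1)| : ℤ):ℝ))) *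
        ∑ m ∈ Fintype.piFinset (fun i : Fin (2*n) => Finset.Icc (0:ℤ) ((A i : ℤ)-1)),
          Real.cos ((((∑ i : Fin (2*n), (A i : ℤ)) - (2*n:ℕ) - 2 * ∑ i, m i : ℤ) : ℝ) * (η/2)) := by
    intro η hs
    have hmd : ∀ K : ℤ, ((K:ℝ) * η / 2) = (K:ℝ) * (η/2) := fun K => mul_div_assoc _ _ _
    rw [hmd]
    rw [Finset.prod_congr rfl (fun j hj => by rw [hmd (k j - k (j+1)), factor_eq])]
    rw [Finset.prod_mul_distrib]
    rw [sin_int_mul, mul_div_assoc]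
    have hG : (Real.sin (((k 1 + k (2*n)).natAbs : ℝ) * (η/2)) / Real.sin (η/2)) *
        ∏ j ∈ Finset.Icc 1 (2*n-1),
          (Real.sin (((k j - k (j+1)).natAbs : ℝ) * (η/2)) / Real.sin (η/2))
        = ∑ m ∈ Fintype.piFinset (fun i : Fin (2*n) => Finset.Icc (0:ℤ) ((A i : ℤ)-1)),
            Real.cos ((((∑ i : Fin (2*n), (A i : ℤ)) - (2*n:ℕ) - 2 * ∑ i, m i : ℤ) : ℝ) * (η/2)) := by
      rw [← hprod (η/2) (Real.sin (η/2))]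
      rw [Finset.prod_div_distrib, Finset.prod_const, Finset.card_univ, Fintype.card_fin]
      rw [prod_sin_eq (2*n) A (η/2)]
      rw [mul_div_cancel_left₀ _ (pow_ne_zero _ hs)]
    rw [← hG]
    ring
  -- evenness
  have hevenA : Even (∑ i : Fin (2*n), (A i : ℤ)) := by
    rw [hsumA]
    have e1 : Even ((|k 1 + k (2*n)| - (k 1 + k (2*n))) +
        ∑ j ∈ Finset.Icc 1 (2*n-1), (|k j - k (j+1)| - (k j - k (j+1)))) :=
      (even_abs_sub _).add (Finset.even_sum _ (fun j _ => even_abs_sub _))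
    have e2 : ∑ j ∈ Finset.Icc 1 (2*n-1), (|k j - k (j+1)| - (k j - k (j+1)))
        = (∑ j ∈ Finset.Icc 1 (2*n-1), |k j - k (j+1)|) - (k 1 - k (2*n)) := by
      rw [Finset.sum_sub_distrib, tele_sum n hn k]
    rw [e2] at e1
    obtain ⟨a, ha⟩ := e1
    exact ⟨a + k 1, by linarith⟩
  have hint : ∀ m : Fin (2*n) → ℤ,
      (∫ η in (-π)..π, Real.cos ((((∑ i : Fin (2*n), (A i : ℤ)) - (2*n:ℕ) - 2 * ∑ i, m i : ℤ) : ℝ) * (η/2)))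
      = if ((∑ i : Fin (2*n), (A i : ℤ)) - (2*n:ℕ) - 2 * ∑ i, m i : ℤ) = 0 then 2*π else 0 := by
    intro m
    have heven : Even ((∑ i : Fin (2*n), (A i : ℤ)) - (2*n:ℕ) - 2 * ∑ i, m i) := by
      refine (hevenA.sub ⟨(n:ℤ), by push_cast; ring⟩).sub (even_two_mul _)
    obtain ⟨t, ht⟩ := heven
    have h2t : ((∑ i : Fin (2*n), (A i : ℤ)) - (2*n:ℕ) - 2 * ∑ i, m i) = 2*t := by omega
    rw [h2t]
    have hc : ∀ η : ℝ, (((2*t : ℤ):ℝ) * (η/2)) = (t:ℝ)*η := by intro η; push_cast; ring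
    simp_rw [hc]
    rw [integral_cos_int]
    by_cases h0 : t = 0
    · rw [if_pos h0, if_pos (by omega)]
    · rw [if_neg h0, if_neg (by omega)]
  -- a.e. equality
  have hsne : ∀ η : ℝ, η ∈ Set.uIoc (-π) π → η ≠ 0 → Real.sin (η/2) ≠ 0 := by
    intro η hη hη0
    rw [Set.uIoc_of_le (by linarith [Real.pi_pos] : -π ≤ π)] at hη
    rcases lt_or_gt_of_ne hη0 with h|h
    · have : Real.sin (η/2) < 0 :=
        Real.sin_neg_of_neg_of_neg_pi_lt (by linarith) (by linarith [hη.1])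
      exact ne_of_lt this
    · have : 0 < Real.sin (η/2) :=
        Real.sin_pos_of_pos_of_lt_pi (by linarith) (by linarith [hη.2, Real.pi_pos])
      exact ne_of_gt this
  have h0 : ∀ᵐ η : ℝ, η ≠ (0:ℝ) := by
    refine (MeasureTheory.ae_iff).mpr ?_
    have : {a : ℝ | ¬ a ≠ 0} = {(0:ℝ)} := by ext a; simp
    rw [this]
    exact MeasureTheory.measure_singleton 0
  have hae : ∀ᵐ η : ℝ, η ∈ Set.uIoc (-π) π →
      (Real.sin (((k 1 + k (2 * n) : ℤ) : ℝ) * η / 2) / Real.sin (η / 2)) *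
        ∏ j ∈ Finset.Icc 1 (2 * n - 1),
          Real.sin (((k j - k (j + 1) : ℤ) : ℝ) * η / 2) /
            (((k j - k (j + 1) : ℤ) : ℝ) * Real.sin (η / 2))
      = (((k 1 + k (2*n)).sign : ℝ) *
          ∏ j ∈ Finset.Icc 1 (2*n-1), (1/((|k j - k (j+1)| : ℤ):ℝ))) *
        ∑ m ∈ Fintype.piFinset (fun i : Fin (2*n) => Finset.Icc (0:ℤ) ((A i : ℤ)-1)),
          Real.cos ((((∑ i : Fin (2*n), (A i : ℤ)) - (2*n:ℕ) - 2 * ∑ i, m i : ℤ) : ℝ) * (η/2)) := by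
    filter_upwards [h0] with η h1 h2
    exact hpt η (hsne η h2 h1)
  rw [intervalIntegral.integral_congr_ae hae]
  rw [intervalIntegral.integral_const_mul]
  rw [intervalIntegral.integral_finset_sum (fun m _ => Continuous.intervalIntegrable (by fun_prop) _ _)]
  rw [Finset.sum_congr rfl (fun m _ => hint m)]
  rw [Finset.sum_ite, Finset.sum_const, Finset.sum_const_zero, add_zero]
  -- set equality
  have hset : { m : Fin (2 * n) → ℤ |
              (∀ i : Fin (2 * n), 0 ≤ m i) ∧
              (∀ i : Fin (2 * n), (i : ℕ) + 1 ≤ 2 * n - 1 →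
                m i ≤ |k ((i : ℕ) + 1) - k ((i : ℕ) + 2)| - 1) ∧
              (∀ i : Fin (2 * n), (i : ℕ) + 1 = 2 * n →
                m i ≤ |k 1 + k (2 * n)| - 1) ∧
              2 * (∑ i, m i) =
                (∑ j ∈ Finset.Icc 1 (2 * n - 1), |k j - k (j + 1)|) +
                  |k 1 + k (2 * n)| - 2 * n }
      = ↑((Fintype.piFinset (fun i : Fin (2*n) => Finset.Icc (0:ℤ) ((A i : ℤ)-1))).filter
          (fun m => ((∑ i : Fin (2*n), (A i : ℤ)) - (2*n:ℕ) - 2 * ∑ i, m i : ℤ) = 0)) := by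
    ext m
    simp only [Set.mem_setOf_eq, Finset.coe_filter, Fintype.mem_piFinset, Finset.mem_Icc]
    constructor
    · rintro ⟨h1, h2, h3, h4⟩
      refine ⟨fun i => ⟨h1 i, ?_⟩, ?_⟩
      · by_cases hc : (i:ℕ)+1 ≤ 2*n-1
        · rw [hAval1 (i:ℕ) hc, Int.natCast_natAbs]
          exact h2 i hc
        · rw [hAval2 (i:ℕ) hc, Int.natCast_natAbs]
          exact h3 i (by have := i.isLt; omega)
      · rw [hsumA]
        push_cast
        push_cast at h4
        linarith
    · rintro ⟨h1, h2⟩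
      rw [hsumA] at h2
      refine ⟨fun i => (h1 i).1, fun i hc => ?_, fun i hc => ?_, ?_⟩
      · have := (h1 i).2
        rw [hAval1 (i:ℕ) hc, Int.natCast_natAbs] at this
        exact this
      · have := (h1 i).2
        rw [hAval2 (i:ℕ) (by omega), Int.natCast_natAbs] at this
        exact this
      · push_cast
        push_cast at h2
        linarith
  rw [hset, Set.ncard_coe_finset]
  rw [nsmul_eq_mul]
  ring
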